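/- Let r be a positive integer and h ∈ F_2[x]. Let L = {(h_1, h_2) ∈ F_2[x]^2 : h_1 − h·h_2 ≡ 0 (mod x^r − 1)}. Then there exist two F_2[x]-linearly independent vectors a, b ∈ L with |a| + |b| = r, where |(f, g)| = max{deg f, deg g} is the degree-norm. -/

import Mathlib

open Polynomial


private lemma zmod2_monic {p : Polynomial (ZMod 2)} (hp : p ≠ 0) : p.Monic := by
  have h1 : p.leadingCoeff ≠ 0 := leadingCoeff_ne_zero.mpr hp
  have h2 : ∀ a : ZMod 2, a ≠ 0 → a = 1 := by decide
  exact h2 _ h1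

/-- Terminal step: a crossover pair gives the conclusion. -/
private lemma bike_terminal (m h : Polynomial (ZMod 2)) (hm : m ≠ 0)
    (v w : Polynomial (ZMod 2) × Polynomial (ZMod 2))
    (mv : m ∣ v.1 - h * v.2) (mw : m ∣ w.1 - h * w.2)
    (det : v.1 * w.2 - v.2 * w.1 = m)
    (hv : v.2.degree ≤ v.1.degree) (hw : w.1.degree < w.2.degree) :
    ∃ a b : Polynomial (ZMod 2) × Polynomial (ZMod 2),
      (m ∣ a.1 - h * a.2) ∧ (m ∣ b.1 - h * b.2) ∧ a.1 * b.2 - a.2 * b.1 = m ∧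
      (max a.1.degree a.2.degree) + (max b.1.degree b.2.degree) = m.degree := by
  refine ⟨v, w, mv, mw, det, ?_⟩
  have hv1 : v.1 ≠ 0 := by
    intro h0
    apply hm
    have hv2 : v.2 = 0 := by
      have h3 := hv
      rw [h0, degree_zero, le_bot_iff, degree_eq_bot] at h3
      exact h3
    rw [← det, h0, hv2]; ring
  have hlt : (v.2 * w.1).degree < (v.1 * w.2).degree := by
    rw [degree_mul, degree_mul]
    calc v.2.degree + w.1.degree ≤ v.1.degree + w.1.degree := add_le_add hv le_rfl
      _ < v.1.degree + w.2.degree :=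
        WithBot.add_lt_add_left (by rwa [Ne, degree_eq_bot]) hw
  have hdeg : m.degree = v.1.degree + w.2.degree := by
    rw [← det, degree_sub_eq_left_of_degree_lt hlt, degree_mul]
  rw [max_eq_left hv, max_eq_right hw.le, hdeg]

private lemma withbot_le_of_lt_succ {a : WithBot ℕ} {n : ℕ}
    (h : a < ((n + 1 : ℕ) : WithBot ℕ)) : a ≤ (n : WithBot ℕ) := by
  cases a with
  | bot => exact bot_le
  | coe k =>
    rw [Nat.cast_withBot] at h ⊢
    have hk : k < n + 1 := by exact_mod_cast h
    exact_mod_cast Nat.lt_succ_iff.mp hk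

/-- Euclidean descent producing a reduced pair. -/
private lemma bike_descent (m h : Polynomial (ZMod 2)) (hm : m ≠ 0) :
    ∀ n : ℕ, ∀ v w : Polynomial (ZMod 2) × Polynomial (ZMod 2),
      w.1.degree < ((n : ℕ) : WithBot ℕ) →
      m ∣ v.1 - h * v.2 → m ∣ w.1 - h * w.2 →
      v.1 * w.2 - v.2 * w.1 = m →
      v.2.degree ≤ v.1.degree →
      ∃ a b : Polynomial (ZMod 2) × Polynomial (ZMod 2),
        (m ∣ a.1 - h * a.2) ∧ (m ∣ b.1 - h * b.2) ∧ a.1 * b.2 - a.2 * b.1 = m ∧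
        (max a.1.degree a.2.degree) + (max b.1.degree b.2.degree) = m.degree := by
  intro n
  induction n with
  | zero =>
    intro v w hfuel mv mw det hv
    have hw1 : w.1 = 0 := by
      rw [← degree_eq_bot]
      exact Nat.WithBot.lt_zero_iff.mp (by exact_mod_cast hfuel)
    have hw2 : w.2 ≠ 0 := by
      intro h0
      apply hm
      rw [← det, hw1, h0]; ring
    exact bike_terminal m h hm v w mv mw det hv
      (by rw [hw1, degree_zero]; exact bot_lt_iff_ne_bot.mpr (degree_eq_bot.not.mpr hw2))
  | succ n ih =>
    intro v w hfuel mv mw det hv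
    by_cases hlt : w.1.degree < w.2.degree
    · exact bike_terminal m h hm v w mv mw det hv hlt
    · push_neg at hlt
      have hw1 : w.1 ≠ 0 := by
        intro h0
        apply hm
        have hw2 : w.2 = 0 := by
          have h3 := hlt
          rw [h0, degree_zero, le_bot_iff, degree_eq_bot] at h3
          exact h3
        rw [← det, h0, hw2]; ring
      have hmon : w.1.Monic := zmod2_monic hw1
      set q : Polynomial (ZMod 2) := v.1 /ₘ w.1 with hq
      set w' : Polynomial (ZMod 2) × Polynomial (ZMod 2) :=
        (v.1 %ₘ w.1, v.2 - q * w.2) with hw'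
      have hmod : v.1 %ₘ w.1 = v.1 - w.1 * q := modByMonic_eq_sub_mul_div v.1 w.1
      have hfuel' : w'.1.degree < ((n : ℕ) : WithBot ℕ) := by
        have h1 : (v.1 %ₘ w.1).degree < w.1.degree := degree_modByMonic_lt v.1 hmon
        exact lt_of_lt_of_le h1 (withbot_le_of_lt_succ hfuel)
      have mw' : m ∣ w'.1 - h * w'.2 := by
        have : w'.1 - h * w'.2 = (v.1 - h * v.2) - q * (w.1 - h * w.2) := by
          simp only [hw', hmod]; ring
        rw [this]
        exact dvd_sub mv (mw.mul_left q)
      have det' : w.1 * w'.2 - w.2 * w'.1 = m := by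
        have hneg : w.1 * w'.2 - w.2 * w'.1 = -(v.1 * w.2 - v.2 * w.1) := by
          simp only [hw', hmod]; ring
        rw [hneg, det, CharTwo.neg_eq]
      exact ih w w' hfuel' mw mw' det' hlt

/-- The BIKE lattice `L = {(h₁, h₂) ∈ F₂[x]² : h₁ − h·h₂ ≡ 0 (mod x^r − 1)}`, as an
`F₂[x]`-submodule of `F₂[x]²`. -/
noncomputable def bikeLattice (r : ℕ) (h : Polynomial (ZMod 2)) :
    Submodule (Polynomial (ZMod 2)) (Polynomial (ZMod 2) × Polynomial (ZMod 2)) where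
  carrier := {p | X ^ r - 1 ∣ p.1 - h * p.2}
  zero_mem' := by simp
  add_mem' := by
    intro a b ha hb
    have : (a + b).1 - h * (a + b).2 = (a.1 - h * a.2) + (b.1 - h * b.2) := by
      simp [Prod.fst_add, Prod.snd_add]; ring
    rw [Set.mem_setOf_eq, this]
    exact dvd_add ha hb
  smul_mem' := by
    intro c p hp
    have : (c • p).1 - h * (c • p).2 = c * (p.1 - h * p.2) := by
      simp [Prod.smul_fst, Prod.smul_snd, smul_eq_mul]; ring
    rw [Set.mem_setOf_eq, this]
    exact Dvd.dvd.mul_left hp c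

/-- The degree-norm of a pair of polynomials: `|(f, g)| = max(deg f, deg g)`,
valued in `WithBot ℕ` (with `deg 0 = ⊥` playing the role of `-∞`). -/
def degNorm (p : Polynomial (ZMod 2) × Polynomial (ZMod 2)) : WithBot ℕ :=
  max p.1.degree p.2.degree

/-- There exist two `F₂[x]`-linearly independent vectors `a, b` in the BIKE
lattice `L` with `|a| + |b| = r`. -/
theorem bikeLattice_exists_reduced_pair (r : ℕ) (hr : 0 < r) (h : Polynomial (ZMod 2)) :
    ∃ a b : Polynomial (ZMod 2) × Polynomial (ZMod 2),
      a ∈ bikeLattice r h ∧ b ∈ bikeLattice r h ∧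
      LinearIndependent (Polynomial (ZMod 2)) ![a, b] ∧
      degNorm a + degNorm b = (r : WithBot ℕ) := by
  set m : Polynomial (ZMod 2) := X ^ r - 1 with hmdef
  have hm1 : m = X ^ r - C 1 := by rw [hmdef, map_one]
  have hmne : m ≠ 0 := by rw [hm1]; exact X_pow_sub_C_ne_zero hr 1
  have hmdeg : m.degree = (r : WithBot ℕ) := by rw [hm1]; exact degree_X_pow_sub_C hr 1
  have hmon : m.Monic := zmod2_monic hmne
  have hfuel : (h %ₘ m).degree < (((h %ₘ m).natDegree + 1 : ℕ) : WithBot ℕ) := by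
    refine lt_of_le_of_lt (degree_le_natDegree) ?_
    rw [Nat.cast_withBot, Nat.cast_withBot]
    exact_mod_cast Nat.lt_succ_self _
  have mw : m ∣ (h %ₘ m, (1 : Polynomial (ZMod 2))).1 -
      h * (h %ₘ m, (1 : Polynomial (ZMod 2))).2 := by
    refine Dvd.intro (-(h /ₘ m)) ?_
    simp only
    rw [modByMonic_eq_sub_mul_div h m]
    ring
  obtain ⟨a, b, ma, mb, det, hdeg⟩ :=
    bike_descent m h hmne ((h %ₘ m).natDegree + 1) (m, 0) (h %ₘ m, 1)
      hfuel (by simp) mw (by simp) (by simp)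
  refine ⟨a, b, ma, mb, ?_, ?_⟩
  · rw [LinearIndependent.pair_iff]
    intro s t hst
    have h1 : s * a.1 + t * b.1 = 0 := by
      have := congrArg Prod.fst hst; simpa using this
    have h2 : s * a.2 + t * b.2 = 0 := by
      have := congrArg Prod.snd hst; simpa using this
    constructor
    · have hs : s * m = 0 := by
        rw [← det]; linear_combination b.2 * h1 - b.1 * h2
      rcases mul_eq_zero.mp hs with h0 | h0
      · exact h0
      · exact absurd h0 hmne
    · have ht : t * m = 0 := by
        rw [← det]; linear_combination a.1 * h2 - a.2 * h1
      rcases mul_eq_zero.mp ht with h0 | h0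
      · exact h0
      · exact absurd h0 hmne
  · rw [← hmdeg]
    exact hdeg
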